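/- For a weighted bipartite connected graph (G, w, w'), the weighted vertex-PI index satisfies PI_v(G, w, w') = n(G) · m(G), where n(G) is the total vertex weight and m(G) is the total edge weight. -/
import Mathlib

open Finset SimpleGraph
open scoped Classical

noncomputable def eDist {V : Type*} (G : SimpleGraph V) (x : V) (f : Sym2 V) : ℕ :=
  Sym2.lift ⟨fun a b => min (G.dist x a) (G.dist x b), fun _ _ => min_comm _ _⟩ f

noncomputable def nSet {V : Type*} [Fintype V] (G : SimpleGraph V) (u v : V) : Finset V :=
  Finset.univ.filter (fun x => G.dist x u < G.dist x v)

noncomputable def mSet {V : Type*} [Fintype V] (G : SimpleGraph V) (u v : V) : Finset (Sym2 V) :=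
  G.edgeFinset.filter (fun f => eDist G u f < eDist G v f)

lemma walk_parity {V : Type*} {G : SimpleGraph V} (c : G.Coloring (ZMod 2))
    {a b : V} (p : G.Walk a b) : c a = c b + (p.length : ZMod 2) := by
  induction p with
  | nil => simp
  | cons h p ih =>
    have : ∀ x y : ZMod 2, x ≠ y → x = y + 1 := by decide
    have h2 := this _ _ (c.valid h)
    simp only [SimpleGraph.Walk.length_cons, Nat.cast_add, Nat.cast_one]
    rw [h2, ih]; ring

lemma dist_ne_of_adj {V : Type*} {G : SimpleGraph V} (hconn : G.Connected)
    (hbip : G.Colorable 2) {u v : V} (huv : G.Adj u v) (x : V) :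
    G.dist x u ≠ G.dist x v := by
  obtain ⟨c⟩ := hbip
  let c' : G.Coloring (ZMod 2) := c
  intro h
  obtain ⟨p, hp⟩ := (hconn x u).exists_walk_length_eq_dist
  obtain ⟨q, hq⟩ := (hconn x v).exists_walk_length_eq_dist
  have h1 := walk_parity c' p
  have h2 := walk_parity c' q
  rw [hp] at h1; rw [hq] at h2
  have : c' u = c' v := by
    have := h1.symm.trans h2
    rw [h] at this
    exact add_right_cancel this
  exact c'.valid huv this

/-- For a weighted bipartite connected graph, PI_v(G,w,w') = n(G)·m(G). -/
theorem stmt2 {V : Type*} [Fintype V] (G : SimpleGraph V)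
    (hconn : G.Connected) (hbip : G.Colorable 2)
    (w : V → ℝ) (w' : Sym2 V → ℝ)
    (hw : ∀ x : V, 0 < w x) (hw' : ∀ f ∈ G.edgeFinset, 0 < w' f) :
    ∑ e ∈ G.edgeFinset, w' e *
        Sym2.lift ⟨fun u v => (∑ x ∈ nSet G u v, w x) + ∑ x ∈ nSet G v u, w x,
          fun _ _ => add_comm _ _⟩ e
      = (∑ x : V, w x) * ∑ e ∈ G.edgeFinset, w' e := by
  rw [Finset.mul_sum]
  apply Finset.sum_congr rfl
  intro e he
  induction e using Sym2.ind with
  | _ u v =>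
    have huv : G.Adj u v := by
      rwa [SimpleGraph.mem_edgeFinset, SimpleGraph.mem_edgeSet] at he
    rw [Sym2.lift_mk]
    have key : (∑ x ∈ nSet G u v, w x) + ∑ x ∈ nSet G v u, w x = ∑ x : V, w x := by
      rw [nSet, nSet,
        ← Finset.sum_filter_add_sum_filter_not Finset.univ (fun x => G.dist x u < G.dist x v) w]
      have hfe : Finset.filter (fun x => G.dist x v < G.dist x u) Finset.univ
          = Finset.filter (fun x => ¬ G.dist x u < G.dist x v) Finset.univ := by
        apply Finset.filter_congr
        intro x _
        have := dist_ne_of_adj hconn hbip huv x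
        simp only [eq_iff_iff, not_lt]
        omega
      rw [hfe]
    show w' s(u, v) * ((∑ x ∈ nSet G u v, w x) + ∑ x ∈ nSet G v u, w x)
        = (∑ x : V, w x) * w' s(u, v)
    rw [key]; ring
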